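/- Let b_1, …, b_n be linearly independent vectors in ℤ[α]^n ⊂ ℝ^n, where each coordinate of each b_i is an element of ℤ[α] with opc at most C, and let B := max_{1≤i≤n} ‖b_i‖₂². Then every nonzero vector x of the lattice Λ = {c_1 b_1 + ⋯ + c_n b_n : c_i ∈ ℤ} satisfies ‖x‖₂² ≥ 1/(P_α·S_α·M_α^{(2n−1)(m−1)}·(n^n·n!)^{m−1}·B^{n−1}·C^{2n(m−1)}), where M_α := m(1+‖f‖_∞)^{m−1}, S_α := 1 + |α| + ⋯ + |α|^{m−1}, and P_α := m·‖f‖₂^{m−1}·(M_α + √m)^{m−1}. -/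

import Mathlib

open Polynomial Finset

set_option maxHeartbeats 1600000

/-- The Euclidean norm of the coefficient vector `(p_0, …, p_{d-1})` of a polynomial. -/
noncomputable def normTwo (d : ℕ) (p : Polynomial ℤ) : ℝ :=
  Real.sqrt (∑ i ∈ Finset.range d, ((p.coeff i : ℝ)) ^ 2)

/-- `‖f‖_∞` over the coefficients `f_0, …, f_{m-1}`. -/
def fninf (m : ℕ) (f : Polynomial ℤ) : ℤ :=
  ((Finset.univ.sup fun i : Fin m => (f.coeff (i : ℕ)).natAbs : ℕ) : ℤ)

/-- `M_α = m (1 + ‖f‖_∞)^{m-1}`. -/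
noncomputable def Malpha (m : ℕ) (f : Polynomial ℤ) : ℝ :=
  (m : ℝ) * (1 + (fninf m f : ℝ)) ^ (m - 1)

/-- `P_α = m ‖f‖₂^{m-1} (M_α + √m)^{m-1}`. -/
noncomputable def Palpha (m : ℕ) (f : Polynomial ℤ) : ℝ :=
  (m : ℝ) * normTwo (m + 1) f ^ (m - 1) * (Malpha m f + Real.sqrt m) ^ (m - 1)

/-- `S_α = 1 + |α| + ⋯ + |α|^{m-1}`. -/
noncomputable def Salpha (m : ℕ) (α : ℝ) : ℝ := ∑ k ∈ Finset.range m, |α| ^ k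

/-- The real number represented by the coefficient vector `v` of an element of `ℤ[α]`. -/
noncomputable def coordVal (m : ℕ) (α : ℝ) (v : Fin m → ℤ) : ℝ :=
  ∑ t, (v t : ℝ) * α ^ (t : ℕ)

lemma fninf_nonneg (m : ℕ) (f : Polynomial ℤ) : (0:ℝ) ≤ (fninf m f : ℝ) := by
  unfold fninf; positivity

lemma coeff_le_fninf {m : ℕ} (f : Polynomial ℤ) {i : ℕ} (hi : i < m) :
    |(f.coeff i : ℝ)| ≤ (fninf m f : ℝ) := by
  have h : ((f.coeff i).natAbs : ℤ) ≤ fninf m f := by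
    unfold fninf
    exact_mod_cast Finset.le_sup (f := fun j : Fin m => (f.coeff (j : ℕ)).natAbs)
      (Finset.mem_univ (⟨i, hi⟩ : Fin m))
  calc |(f.coeff i : ℝ)| = (((f.coeff i).natAbs : ℤ) : ℝ) := by
        rw [Nat.cast_natAbs]; push_cast; rfl
    _ ≤ (fninf m f : ℝ) := by exact_mod_cast h
lemma root_bound {m : ℕ} (hm : 1 ≤ m) {f : Polynomial ℤ} (hmonic : f.Monic)
    (hdeg : f.natDegree = m) {z : ℂ} (hz : Polynomial.aeval z f = 0) :
    ‖z‖ ≤ 1 + (fninf m f : ℝ) := by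
  set F := (fninf m f : ℝ) with hF
  have hF0 : 0 ≤ F := fninf_nonneg m f
  set r := ‖z‖ with hr
  have hr0 : 0 ≤ r := norm_nonneg z
  by_cases hr1 : r ≤ 1
  · linarith
  push_neg at hr1
  have hsum : (0:ℂ) = ∑ i ∈ Finset.range (m+1), (f.coeff i : ℂ) * z ^ i := by
    rw [← hz, Polynomial.aeval_eq_sum_range' (n := m+1) (by rw [hdeg]; omega)]
    exact Finset.sum_congr rfl fun i _ => by rw [zsmul_eq_mul]
  have hlead : (f.coeff m : ℂ) = 1 := by
    have h1 : f.coeff m = 1 := by rw [← hdeg]; exact hmonic.coeff_natDegree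
    rw [h1]; norm_cast
  have hzm : z ^ m = -∑ i ∈ Finset.range m, (f.coeff i : ℂ) * z ^ i := by
    have := hsum
    rw [Finset.sum_range_succ, hlead, one_mul] at this
    linear_combination -this
  have hstep : r ^ m ≤ F * ∑ i ∈ Finset.range m, r ^ i := by
    calc r ^ m = ‖z ^ m‖ := by rw [norm_pow]
      _ = ‖∑ i ∈ Finset.range m, (f.coeff i : ℂ) * z ^ i‖ := by
          rw [hzm, norm_neg]
      _ ≤ ∑ i ∈ Finset.range m, ‖(f.coeff i : ℂ) * z ^ i‖ :=
          norm_sum_le _ _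
      _ ≤ ∑ i ∈ Finset.range m, F * r ^ i := by
          refine Finset.sum_le_sum fun i hi => ?_
          rw [norm_mul, norm_pow]
          have h1 : ‖(f.coeff i : ℂ)‖ ≤ F := by
            rw [show ((f.coeff i : ℂ)) = ((f.coeff i : ℝ) : ℂ) by push_cast; rfl,
              Complex.norm_real, Real.norm_eq_abs]
            exact coeff_le_fninf f (Finset.mem_range.mp hi)
          exact mul_le_mul_of_nonneg_right h1 (pow_nonneg hr0 i) |>.trans
            (le_of_eq rfl)
      _ = F * ∑ i ∈ Finset.range m, r ^ i := by rw [Finset.mul_sum]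
  have hgeom : (∑ i ∈ Finset.range m, r ^ i) * (r - 1) = r ^ m - 1 := geom_sum_mul r m
  have hpow : (0:ℝ) < r ^ m := pow_pos (by linarith) m
  have h2 : r ^ m * (r - 1) ≤ F * (r ^ m - 1) := by
    calc r ^ m * (r - 1) ≤ (F * ∑ i ∈ Finset.range m, r ^ i) * (r - 1) :=
          mul_le_mul_of_nonneg_right hstep (by linarith)
      _ = F * (r ^ m - 1) := by rw [mul_assoc, hgeom]
  have h3 : F * (r ^ m - 1) ≤ F * r ^ m := by nlinarith
  nlinarith


lemma hadamard_ineq {n : ℕ} (A : Matrix (Fin n) (Fin n) ℝ) :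
    |A.det| ≤ ∏ i, Real.sqrt (∑ j, A i j ^ 2) := by
  classical
  have h : Module.finrank ℝ (EuclideanSpace ℝ (Fin n)) = Fintype.card (Fin n) := by
    simp [finrank_euclideanSpace]
  set v : Fin n → EuclideanSpace ℝ (Fin n) :=
    fun i => (EuclideanSpace.equiv (Fin n) ℝ).symm (A i) with hv
  have hvnorm : ∀ i, ‖v i‖ = Real.sqrt (∑ j, A i j ^ 2) := by
    intro i
    rw [EuclideanSpace.norm_eq]
    congr 1
    refine Finset.sum_congr rfl fun j _ => ?_
    simp [v, Real.norm_eq_abs, sq_abs]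
  set e := @InnerProductSpace.gramSchmidtOrthonormalBasis ℝ (EuclideanSpace ℝ (Fin n)) _ _ _ (Fin n)
    Fin.instLinearOrder _ Finite.to_wellFoundedLT _ _ h v with he
  have hdet : e.toBasis.det v = ∏ i, (inner ℝ (e i) (v i) : ℝ) :=
    @InnerProductSpace.gramSchmidtOrthonormalBasis_det ℝ (EuclideanSpace ℝ (Fin n)) _ _ _ (Fin n)
      Fin.instLinearOrder _ Finite.to_wellFoundedLT _ _ h v _
  set std := EuclideanSpace.basisFun (Fin n) ℝ with hstd
  have hstdmat : std.toBasis.toMatrix v = A.transpose := by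
    ext i j
    simp [Module.Basis.toMatrix_apply, Matrix.transpose_apply, std, v]
  have hmul : e.toBasis.toMatrix (⇑std.toBasis) * std.toBasis.toMatrix v
      = e.toBasis.toMatrix v := Module.Basis.toMatrix_mul_toMatrix _ _ _
  have hchg : |e.toBasis.det ⇑std.toBasis| = 1 := by
    rcases e.det_to_matrix_orthonormalBasis_real std with h1 | h1 <;>
      rw [show e.toBasis.det ⇑std.toBasis = e.toBasis.det ⇑std by rw [OrthonormalBasis.coe_toBasis]] <;>
      simp [h1]
  have hdets : e.toBasis.det v = (e.toBasis.det ⇑std.toBasis) * A.det := by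
    rw [Module.Basis.det_apply, Module.Basis.det_apply, ← hmul, Matrix.det_mul, hstdmat,
      Matrix.det_transpose]
  have habs : |A.det| = |e.toBasis.det v| := by
    rw [hdets, abs_mul, hchg, one_mul]
  rw [habs, hdet]
  calc |∏ i, (inner ℝ (e i) (v i) : ℝ)| ≤ ∏ i, |(inner ℝ (e i) (v i) : ℝ)| := by
        rw [Finset.abs_prod]
    _ ≤ ∏ i, ‖v i‖ := by
        refine Finset.prod_le_prod (fun i _ => abs_nonneg _) fun i _ => ?_
        calc |(inner ℝ (e i) (v i) : ℝ)| ≤ ‖e i‖ * ‖v i‖ := abs_real_inner_le_norm _ _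
          _ = ‖v i‖ := by rw [e.orthonormal.1 i, one_mul]
    _ = ∏ i, Real.sqrt (∑ j, A i j ^ 2) := Finset.prod_congr rfl fun i _ => hvnorm i

theorem stmt_17 (m : ℕ) (hm : 1 ≤ m) (f : Polynomial ℤ)
    (hmonic : f.Monic) (hdeg : f.natDegree = m)
    (hirr : Irreducible (f.map (Int.castRingHom ℚ)))
    (α : ℝ) (hroot : Polynomial.aeval α f = 0)
    (n : ℕ) (b : Fin n → Fin n → (Fin m → ℤ))
    (hind : LinearIndependent ℝ (fun i => fun k => coordVal m α (b i k)))
    (C : ℤ)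
    (hC : ∀ i k, ((Finset.univ.sup fun t => (b i k t).natAbs : ℕ) : ℤ) ≤ C)
    (B : ℝ) (hB : ∀ i, ∑ k, coordVal m α (b i k) ^ 2 ≤ B) :
    ∀ c : Fin n → ℤ, (∑ i, (c i : ℝ) • fun k => coordVal m α (b i k)) ≠ 0 →
      (∑ k, (∑ i, (c i : ℝ) • fun k' => coordVal m α (b i k')) k ^ 2) ≥
        1 / (Palpha m f * Salpha m α *
          Malpha m f ^ ((2 * n - 1) * (m - 1)) *
          ((n : ℝ) ^ n * (n.factorial : ℝ)) ^ (m - 1) *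
          B ^ (n - 1) * (C : ℝ) ^ (2 * n * (m - 1))) := by
  classical
  intro c hx
  rcases Nat.eq_zero_or_pos n with hn0 | hn
  · exfalso
    apply hx
    subst hn0
    simp
  have hfq : (f.map (Int.castRingHom ℚ)).Monic := hmonic.map _
  haveI : Fact (Irreducible (f.map (Int.castRingHom ℚ))) := ⟨hirr⟩
  set fq := f.map (Int.castRingHom ℚ) with hfqdef
  have hfq0 : fq ≠ 0 := hfq.ne_zero
  set K := AdjoinRoot fq with hK
  set θ : K := AdjoinRoot.root fq with hθ
  have hfqdeg : fq.natDegree = m := by rw [hfqdef, hmonic.natDegree_map, hdeg]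
  haveI : FiniteDimensional ℚ K := (AdjoinRoot.powerBasis hfq0).finite
  have hfinrank : Module.finrank ℚ K = m := by
    rw [PowerBasis.finrank (AdjoinRoot.powerBasis hfq0)]
    show fq.natDegree = m
    exact hfqdeg
  have hαroot : Polynomial.aeval α fq = 0 := by
    rw [hfqdef, show Int.castRingHom ℚ = algebraMap ℤ ℚ from rfl,
      Polynomial.aeval_map_algebraMap]
    exact hroot
  set σR : K →ₐ[ℚ] ℝ := AdjoinRoot.liftAlgHom fq (Algebra.ofId ℚ ℝ) α hαroot with hσR
  have hσRθ : σR θ = α := AdjoinRoot.liftAlgHom_root fq (Algebra.ofId ℚ ℝ) α hαroot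
  have hθf : Polynomial.aeval θ f = 0 := by
    rw [show (Polynomial.aeval θ f : K) = Polynomial.aeval θ (f.map (algebraMap ℤ ℚ)) from
      (Polynomial.aeval_map_algebraMap ℚ θ f).symm]
    rw [show f.map (algebraMap ℤ ℚ) = fq from rfl]
    rw [Polynomial.aeval_def]
    exact AdjoinRoot.eval₂_root fq
  have hθint : IsIntegral ℤ θ := ⟨f, hmonic, hθf⟩
  have hcard : Fintype.card (K →ₐ[ℚ] ℂ) = m := by
    rw [AlgHom.card]; exact hfinrank
  -- constants
  set F : ℝ := (fninf m f : ℝ) with hF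
  have hF0 : (0:ℝ) ≤ F := fninf_nonneg m f
  set M : ℝ := Malpha m f with hM
  have hM1 : (1:ℝ) ≤ M := by
    rw [hM, Malpha]
    have h1 : (1:ℝ) ≤ (m:ℝ) := by exact_mod_cast hm
    have h2 : (1:ℝ) ≤ (1 + F) ^ (m-1) := one_le_pow₀ (by linarith)
    nlinarith
  have hC0 : (0:ℤ) ≤ C := le_trans (Int.natCast_nonneg _) (hC ⟨0, hn⟩ ⟨0, hn⟩)
  have hCb : ∀ i k t, |((b i k t : ℤ) : ℝ)| ≤ (C : ℝ) := by
    intro i k t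
    have h1 : ((b i k t).natAbs : ℤ) ≤ C := by
      refine le_trans ?_ (hC i k)
      exact_mod_cast Finset.le_sup (f := fun t : Fin m => (b i k t).natAbs) (Finset.mem_univ t)
    have h2 : |b i k t| ≤ C := by rw [Int.abs_eq_natAbs]; exact h1
    exact_mod_cast h2
  -- the matrix over K
  set EK : Matrix (Fin n) (Fin n) K :=
    Matrix.of (fun i k => ∑ t, ((b i k t : ℤ) : K) * θ ^ (t : ℕ)) with hEK
  set Gmat : Matrix (Fin n) (Fin n) ℝ :=
    Matrix.of (fun i k => coordVal m α (b i k)) with hGmat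
  have hEmap : EK.map σR = Gmat := by
    ext i k
    simp only [Matrix.map_apply, hEK, Matrix.of_apply, map_sum, map_mul, map_intCast (F := AdjoinRoot fq →ₐ[ℚ] ℝ), map_pow,
      hσRθ, hGmat, coordVal]
  have hU : IsUnit Gmat := Matrix.linearIndependent_rows_iff_isUnit.mp hind
  have hdetG : Gmat.det ≠ 0 := ((Matrix.isUnit_iff_isUnit_det Gmat).mp hU).ne_zero
  have hσRdet : σR EK.det = Gmat.det := by
    rw [← hEmap]
    exact (RingHom.map_det (σR : K →+* ℝ) EK).trans rfl
  have hdetK0 : EK.det ≠ 0 := fun h => hdetG (by rw [← hσRdet, h, map_zero])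
  -- integrality
  have hdetKint : IsIntegral ℤ EK.det := by
    have hmem : EK.det ∈ integralClosure ℤ K := by
      rw [Matrix.det_apply]
      refine Subalgebra.sum_mem _ fun σ _ => ?_
      refine Subalgebra.zsmul_mem _ (Subalgebra.prod_mem _ fun i _ => ?_) _
      show (∑ t, ((b (σ i) i t : ℤ) : K) * θ ^ (t : ℕ)) ∈ integralClosure ℤ K
      refine Subalgebra.sum_mem _ fun t _ => ?_
      exact Subalgebra.mul_mem _ (Subalgebra.intCast_mem _ _)
        (Subalgebra.pow_mem _ hθint _)
    exact hmem
  set N : ℚ := Algebra.norm ℚ EK.det with hN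
  have hN0 : N ≠ 0 := by
    rw [hN]
    exact (Algebra.norm_ne_zero_iff).mpr hdetK0
  have hNint : IsIntegral ℤ N := Algebra.isIntegral_norm ℚ hdetKint
  obtain ⟨zz, hzz⟩ := IsIntegrallyClosed.isIntegral_iff.mp hNint
  have hzz0 : zz ≠ 0 := by
    rintro rfl
    exact hN0 (by rw [← hzz]; simp)
  have hNabs : (1:ℝ) ≤ ‖(algebraMap ℚ ℂ) N‖ := by
    have h1 : (1:ℤ) ≤ |zz| := Int.one_le_abs hzz0
    have h2 : (algebraMap ℚ ℂ) N = ((zz : ℚ) : ℂ) := by rw [← hzz]; norm_cast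
    rw [h2]
    rw [show (((zz : ℚ)) : ℂ) = ((zz : ℤ) : ℂ) by push_cast; rfl]
    rw [Complex.norm_intCast]
    exact_mod_cast (by exact_mod_cast h1 : (1:ℝ) ≤ |(zz:ℝ)|)
  have hprod : ‖(algebraMap ℚ ℂ) N‖ = ∏ σ : K →ₐ[ℚ] ℂ, ‖σ EK.det‖ := by
    rw [hN, Algebra.norm_eq_prod_embeddings, norm_prod]
  -- C ≥ 1
  have hC1 : (1:ℤ) ≤ C := by
    by_contra hlt
    push_neg at hlt
    have hCeq : C = 0 := le_antisymm (by omega) hC0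
    have hb0 : ∀ k t, b ⟨0, hn⟩ k t = 0 := by
      intro k t
      have h1 : ((b ⟨0, hn⟩ k t).natAbs : ℤ) ≤ C := by
        refine le_trans ?_ (hC ⟨0, hn⟩ k)
        exact_mod_cast Finset.le_sup (f := fun t : Fin m => (b ⟨0, hn⟩ k t).natAbs)
          (Finset.mem_univ t)
      rw [hCeq] at h1
      omega
    refine hind.ne_zero ⟨0, hn⟩ ?_
    funext k
    simp [coordVal, hb0]
  have hCM1 : (1:ℝ) ≤ (C:ℝ) * M := by
    have h1 : (1:ℝ) ≤ (C:ℝ) := by exact_mod_cast hC1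
    nlinarith
  set RR : ℝ := (n.factorial : ℝ) * ((C:ℝ) * M) ^ n with hRR
  have hRR1 : (1:ℝ) ≤ RR := by
    have h1 : (1:ℝ) ≤ (n.factorial : ℝ) := by exact_mod_cast n.factorial_pos
    have h2 : (1:ℝ) ≤ ((C:ℝ) * M) ^ n := one_le_pow₀ hCM1
    nlinarith
  -- embeddings bounds
  have hσθ : ∀ σ : K →ₐ[ℚ] ℂ, ‖σ θ‖ ≤ 1 + F := by
    intro σ
    refine root_bound hm hmonic hdeg ?_
    have h1 : Polynomial.aeval (σ θ) f = σ.toRingHom (Polynomial.aeval θ f) := by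
      rw [Polynomial.aeval_def, Polynomial.aeval_def, Polynomial.hom_eval₂]
      congr 1
      exact Subsingleton.elim _ _
    rw [h1, hθf, map_zero]
  have hentry : ∀ (σ : K →ₐ[ℚ] ℂ) (i k : Fin n),
      ‖(EK.map σ) i k‖ ≤ (C:ℝ) * M := by
    intro σ i k
    have he : (EK.map σ) i k = ∑ t, ((b i k t : ℤ) : ℂ) * (σ θ) ^ (t : ℕ) := by
      simp only [Matrix.map_apply, hEK, Matrix.of_apply, map_sum, map_mul, map_intCast (F := AdjoinRoot fq →ₐ[ℚ] ℂ), map_pow]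
    rw [he]
    calc ‖∑ t, ((b i k t : ℤ) : ℂ) * (σ θ) ^ (t : ℕ)‖
        ≤ ∑ t, ‖((b i k t : ℤ) : ℂ) * (σ θ) ^ (t : ℕ)‖ := norm_sum_le _ _
      _ ≤ ∑ _t : Fin m, (C:ℝ) * (1 + F) ^ (m-1) := by
          refine Finset.sum_le_sum fun t _ => ?_
          rw [norm_mul, norm_pow, Complex.norm_intCast]
          have h1 : |((b i k t : ℤ) : ℝ)| ≤ (C:ℝ) := hCb i k t
          have h2 : ‖σ θ‖ ^ (t:ℕ) ≤ (1 + F) ^ (t:ℕ) :=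
            pow_le_pow_left₀ (norm_nonneg _) (hσθ σ) _
          have h3 : (1 + F) ^ (t:ℕ) ≤ (1 + F) ^ (m-1) := by
            refine pow_le_pow_right₀ (by linarith) ?_
            have := t.2; omega
          have h4 : (0:ℝ) ≤ ‖σ θ‖ ^ (t:ℕ) := pow_nonneg (norm_nonneg _) _
          have h5 : (0:ℝ) ≤ (1+F)^(m-1) := by positivity
          nlinarith [abs_nonneg ((b i k t : ℤ) : ℝ)]
      _ = (C:ℝ) * M := by
          rw [Finset.sum_const, Finset.card_univ, Fintype.card_fin, nsmul_eq_mul, hM, Malpha]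
          ring
  have hσdet : ∀ σ : K →ₐ[ℚ] ℂ, ‖σ EK.det‖ ≤ RR := by
    intro σ
    have h1 : σ EK.det = (EK.map σ).det := RingHom.map_det (σ : K →+* ℂ) EK
    rw [h1, hRR]
    have h2 := Matrix.det_le (A := EK.map σ) (abv := NormedField.toAbsoluteValue ℂ) (x := (C:ℝ)*M) (hentry σ)
    have h3 : ‖(EK.map σ).det‖ ≤ (Fintype.card (Fin n)).factorial • ((C:ℝ)*M) ^ Fintype.card (Fin n) := h2
    simpa [Fintype.card_fin, nsmul_eq_mul] using h3
  set σ₀ : K →ₐ[ℚ] ℂ := (Complex.ofRealAm.restrictScalars ℚ).comp σR with hσ₀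
  have hσ₀det : ‖σ₀ EK.det‖ = |Gmat.det| := by
    have : σ₀ EK.det = ((σR EK.det : ℝ) : ℂ) := rfl
    rw [this, Complex.norm_real, Real.norm_eq_abs, hσRdet]
  have hrest : ∏ σ ∈ Finset.univ.erase σ₀, ‖σ EK.det‖ ≤ RR ^ (m-1) := by
    calc ∏ σ ∈ Finset.univ.erase σ₀, ‖σ EK.det‖
        ≤ ∏ _σ ∈ Finset.univ.erase σ₀, RR :=
          Finset.prod_le_prod (fun σ _ => norm_nonneg _) (fun σ _ => hσdet σ)
      _ = RR ^ (m-1) := by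
          rw [Finset.prod_const, Finset.card_erase_of_mem (Finset.mem_univ _),
            Finset.card_univ, hcard]
  have hmain1 : (1:ℝ) ≤ |Gmat.det| * RR ^ (m-1) := by
    have h1 := hNabs
    rw [hprod, ← Finset.mul_prod_erase Finset.univ _ (Finset.mem_univ σ₀), hσ₀det] at h1
    calc (1:ℝ) ≤ |Gmat.det| * ∏ σ ∈ Finset.univ.erase σ₀, ‖σ EK.det‖ := h1
      _ ≤ |Gmat.det| * RR ^ (m-1) := by
          exact mul_le_mul_of_nonneg_left hrest (abs_nonneg _)
  -- B positive
  have hB0 : (0:ℝ) < B := by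
    have hrow := hind.ne_zero ⟨0, hn⟩
    have hex : ∃ k, coordVal m α (b ⟨0, hn⟩ k) ≠ 0 := by
      by_contra h
      push_neg at h
      exact hrow (funext fun k => h k)
    obtain ⟨k0, hk0⟩ := hex
    have h1 : (0:ℝ) < coordVal m α (b ⟨0, hn⟩ k0) ^ 2 := by positivity
    have h2 : coordVal m α (b ⟨0, hn⟩ k0) ^ 2 ≤ ∑ k, coordVal m α (b ⟨0, hn⟩ k) ^ 2 :=
      Finset.single_le_sum (f := fun k => coordVal m α (b ⟨0, hn⟩ k) ^ 2)
        (fun k _ => sq_nonneg _) (Finset.mem_univ k0)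
    linarith [hB ⟨0, hn⟩]
  -- a nonzero coefficient
  have hcex : ∃ i0, c i0 ≠ 0 := by
    by_contra h
    push_neg at h
    refine hx ?_
    funext k
    simp [h]
  obtain ⟨i0, hi0⟩ := hcex
  have hci0 : (1:ℝ) ≤ |(c i0 : ℝ)| := by
    have h1 : (1:ℤ) ≤ |c i0| := Int.one_le_abs hi0
    calc (1:ℝ) ≤ (|c i0| : ℤ) := by exact_mod_cast h1
      _ = |(c i0 : ℝ)| := by push_cast; rfl
  set xrow : Fin n → ℝ := fun k => ∑ i, (c i : ℝ) * coordVal m α (b i k) with hxrow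
  set X : ℝ := ∑ k, xrow k ^ 2 with hXdef
  have hX0 : (0:ℝ) ≤ X := Finset.sum_nonneg fun k _ => sq_nonneg _
  set G' : Matrix (Fin n) (Fin n) ℝ := Gmat.updateRow i0 xrow with hG'
  have hxrowcomb : xrow = ∑ i, (c i : ℝ) • Gmat i := by
    funext k
    rw [hxrow]
    simp [Finset.sum_apply, hGmat]
  have hdetG' : G'.det = (c i0 : ℝ) * Gmat.det := by
    rw [hG', hxrowcomb, Matrix.det_updateRow_sum]
    simp
  have hG'le : |G'.det| ≤ Real.sqrt X * Real.sqrt B ^ (n - 1) := by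
    refine le_trans (hadamard_ineq G') ?_
    rw [← Finset.mul_prod_erase Finset.univ _ (Finset.mem_univ i0)]
    have e1 : Real.sqrt (∑ j, G' i0 j ^ 2) = Real.sqrt X := by
      rw [hXdef]
      congr 1
      refine Finset.sum_congr rfl fun j _ => ?_
      rw [hG', Matrix.updateRow_self]
    rw [e1]
    refine mul_le_mul_of_nonneg_left ?_ (Real.sqrt_nonneg _)
    calc ∏ j ∈ Finset.univ.erase i0, Real.sqrt (∑ k, G' j k ^ 2)
        ≤ ∏ _j ∈ Finset.univ.erase i0, Real.sqrt B := by
          refine Finset.prod_le_prod (fun j _ => Real.sqrt_nonneg _) (fun j hj => ?_)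
          refine Real.sqrt_le_sqrt ?_
          have hjne : j ≠ i0 := Finset.ne_of_mem_erase hj
          have e2 : ∀ k, G' j k = Gmat j k := fun k => by
            rw [hG', Matrix.updateRow_ne hjne]
          calc (∑ k, G' j k ^ 2) = ∑ k, coordVal m α (b j k) ^ 2 := by
                refine Finset.sum_congr rfl fun k _ => by rw [e2 k]; rfl
            _ ≤ B := hB j
      _ = Real.sqrt B ^ (n - 1) := by
          rw [Finset.prod_const, Finset.card_erase_of_mem (Finset.mem_univ _),
            Finset.card_univ, Fintype.card_fin]
  have hmain2 : (1:ℝ) ≤ Real.sqrt X * Real.sqrt B ^ (n - 1) * RR ^ (m - 1) := by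
    have h1 : |Gmat.det| ≤ Real.sqrt X * Real.sqrt B ^ (n - 1) := by
      calc |Gmat.det| ≤ |(c i0 : ℝ)| * |Gmat.det| :=
            le_mul_of_one_le_left (abs_nonneg _) hci0
        _ = |G'.det| := by rw [hdetG', abs_mul]
        _ ≤ _ := hG'le
    calc (1:ℝ) ≤ |Gmat.det| * RR ^ (m - 1) := hmain1
      _ ≤ Real.sqrt X * Real.sqrt B ^ (n - 1) * RR ^ (m - 1) :=
          mul_le_mul_of_nonneg_right h1 (pow_nonneg (by linarith) _)
  set Q : ℝ := B ^ (n - 1) * RR ^ (2 * (m - 1)) with hQ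
  have hsq : (1:ℝ) ≤ X * Q := by
    have h0 : (0:ℝ) ≤ Real.sqrt X * Real.sqrt B ^ (n - 1) * RR ^ (m - 1) := by positivity
    have h2 : (1:ℝ) * 1 ≤ (Real.sqrt X * Real.sqrt B ^ (n - 1) * RR ^ (m - 1)) *
        (Real.sqrt X * Real.sqrt B ^ (n - 1) * RR ^ (m - 1)) :=
      mul_le_mul hmain2 hmain2 (by norm_num) h0
    have e1 : Real.sqrt X * Real.sqrt X = X := Real.mul_self_sqrt hX0
    have e2 : Real.sqrt B * Real.sqrt B = B := Real.mul_self_sqrt hB0.le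
    calc (1:ℝ) = 1 * 1 := by ring
      _ ≤ _ := h2
      _ = (Real.sqrt X * Real.sqrt X) * (Real.sqrt B * Real.sqrt B) ^ (n - 1) *
          (RR ^ (m - 1) * RR ^ (m - 1)) := by ring
      _ = X * Q := by
          rw [e1, e2, hQ, ← pow_add]
          have : m - 1 + (m - 1) = 2 * (m - 1) := by ring
          rw [this]
          ring
  have hQpos : (0:ℝ) < Q := by
    rw [hQ]
    exact mul_pos (pow_pos hB0 _) (pow_pos (by linarith) _)
  have hXlow : 1 / Q ≤ X := by
    rw [div_le_iff₀ hQpos]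
    linarith
  -- comparison of denominators
  have hSal1 : (1:ℝ) ≤ Salpha m α := by
    rw [Salpha]
    have h1 : |α| ^ (0:ℕ) ≤ ∑ k ∈ Finset.range m, |α| ^ k :=
      Finset.single_le_sum (f := fun k => |α| ^ k) (fun k _ => pow_nonneg (abs_nonneg _) _)
        (Finset.mem_range.mpr hm)
    simpa using h1
  have hnormTwo1 : (1:ℝ) ≤ normTwo (m + 1) f := by
    rw [normTwo]
    have hcm : f.coeff m = 1 := by rw [← hdeg]; exact hmonic.coeff_natDegree
    have h2 : (1:ℝ) ≤ ∑ i ∈ Finset.range (m + 1), ((f.coeff i : ℝ)) ^ 2 := by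
      have h3 : ((f.coeff m : ℝ)) ^ 2 ≤ ∑ i ∈ Finset.range (m + 1), ((f.coeff i : ℝ)) ^ 2 :=
        Finset.single_le_sum (f := fun i => ((f.coeff i : ℝ)) ^ 2)
          (fun i _ => sq_nonneg _) (Finset.mem_range.mpr (Nat.lt_succ_self m))
      rw [hcm] at h3
      norm_num at h3
      exact h3
    calc (1:ℝ) = Real.sqrt 1 := Real.sqrt_one.symm
      _ ≤ _ := Real.sqrt_le_sqrt h2
  have hMP : M ^ (m - 1) ≤ Palpha m f := by
    rw [Palpha, ← hM]
    have h1 : M ^ (m - 1) ≤ (M + Real.sqrt m) ^ (m - 1) :=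
      pow_le_pow_left₀ (by linarith) (by linarith [Real.sqrt_nonneg (m:ℝ)]) _
    have h2 : (1:ℝ) ≤ normTwo (m + 1) f ^ (m - 1) := one_le_pow₀ hnormTwo1
    have h3 : (1:ℝ) ≤ (m:ℝ) := by exact_mod_cast hm
    have h4 : (0:ℝ) ≤ (M + Real.sqrt m) ^ (m - 1) := pow_nonneg (by positivity) _
    calc M ^ (m - 1) ≤ (M + Real.sqrt m) ^ (m - 1) := h1
      _ = 1 * 1 * (M + Real.sqrt m) ^ (m - 1) := by ring
      _ ≤ (m:ℝ) * normTwo (m + 1) f ^ (m - 1) * (M + Real.sqrt m) ^ (m - 1) := by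
          refine mul_le_mul_of_nonneg_right ?_ h4
          exact mul_le_mul h3 h2 (by norm_num) (by linarith)
  have hMPS : M ^ (m - 1) ≤ Palpha m f * Salpha m α := by
    have hP0 : (0:ℝ) ≤ Palpha m f := le_trans (pow_nonneg (by linarith) _) hMP
    calc M ^ (m - 1) ≤ Palpha m f := hMP
      _ ≤ Palpha m f * Salpha m α := le_mul_of_one_le_right hP0 hSal1
  have hfac : ((n.factorial : ℝ)) ^ 2 ≤ (n:ℝ) ^ n * n.factorial := by
    have h1 : (n.factorial : ℝ) ≤ (n:ℝ) ^ n := by exact_mod_cast Nat.factorial_le_pow n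
    have h2 : (0:ℝ) ≤ (n.factorial : ℝ) := by positivity
    nlinarith
  have h2fac : ((n.factorial : ℝ)) ^ (2 * (m - 1)) ≤ ((n:ℝ) ^ n * n.factorial) ^ (m - 1) := by
    rw [pow_mul]
    exact pow_le_pow_left₀ (by positivity) hfac _
  have hexp : (2 * n - 1) * (m - 1) + (m - 1) = 2 * n * (m - 1) := by
    obtain ⟨k, rfl⟩ : ∃ k, n = k + 1 := ⟨n - 1, by omega⟩
    have h1 : 2 * (k + 1) - 1 = 2 * k + 1 := by omega
    rw [h1]
    ring
  have hMsplit : M ^ (2 * n * (m - 1)) = M ^ ((2 * n - 1) * (m - 1)) * M ^ (m - 1) := by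
    rw [← pow_add, hexp]
  have hRRexp : RR ^ (2 * (m - 1)) =
      ((n.factorial : ℝ)) ^ (2 * (m - 1)) * (C:ℝ) ^ (2 * n * (m - 1)) * M ^ (2 * n * (m - 1)) := by
    rw [hRR, mul_pow, ← pow_mul]
    have e : n * (2 * (m - 1)) = 2 * n * (m - 1) := by ring
    rw [e, mul_pow]
    ring
  have hC0' : (0:ℝ) ≤ (C:ℝ) := by exact_mod_cast hC0
  have hCpow0 : (0:ℝ) ≤ (C:ℝ) ^ (2 * n * (m - 1)) := pow_nonneg hC0' _
  have hMpow0 : (0:ℝ) ≤ M ^ ((2 * n - 1) * (m - 1)) := pow_nonneg (by linarith) _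
  have hNn0 : (0:ℝ) ≤ ((n:ℝ) ^ n * n.factorial) ^ (m - 1) := by positivity
  have key2 : ((n.factorial : ℝ)) ^ (2 * (m - 1)) * (C:ℝ) ^ (2 * n * (m - 1)) *
      (M ^ ((2 * n - 1) * (m - 1)) * M ^ (m - 1)) ≤
      ((n:ℝ) ^ n * n.factorial) ^ (m - 1) * (C:ℝ) ^ (2 * n * (m - 1)) *
      (M ^ ((2 * n - 1) * (m - 1)) * (Palpha m f * Salpha m α)) := by
    refine mul_le_mul (mul_le_mul_of_nonneg_right h2fac hCpow0)
      (mul_le_mul_of_nonneg_left hMPS hMpow0)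
      (mul_nonneg hMpow0 (pow_nonneg (by linarith) _))
      (mul_nonneg hNn0 hCpow0)
  have key : Q ≤ Palpha m f * Salpha m α * M ^ ((2 * n - 1) * (m - 1)) *
      ((n:ℝ) ^ n * (n.factorial : ℝ)) ^ (m - 1) * B ^ (n - 1) * (C:ℝ) ^ (2 * n * (m - 1)) := by
    calc Q = B ^ (n - 1) * (((n.factorial : ℝ)) ^ (2 * (m - 1)) * (C:ℝ) ^ (2 * n * (m - 1)) *
          (M ^ ((2 * n - 1) * (m - 1)) * M ^ (m - 1))) := by
          rw [hQ, hRRexp, hMsplit]; try ring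
      _ ≤ B ^ (n - 1) * (((n:ℝ) ^ n * n.factorial) ^ (m - 1) * (C:ℝ) ^ (2 * n * (m - 1)) *
          (M ^ ((2 * n - 1) * (m - 1)) * (Palpha m f * Salpha m α))) :=
          mul_le_mul_of_nonneg_left key2 (pow_nonneg hB0.le _)
      _ = _ := by rw [hM]; ring
  have hfinal : 1 / (Palpha m f * Salpha m α * Malpha m f ^ ((2 * n - 1) * (m - 1)) *
      ((n:ℝ) ^ n * (n.factorial : ℝ)) ^ (m - 1) * B ^ (n - 1) * (C:ℝ) ^ (2 * n * (m - 1))) ≤ X := by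
    refine le_trans ?_ hXlow
    refine one_div_le_one_div_of_le hQpos ?_
    rw [hM] at key
    exact key
  rw [ge_iff_le]
  calc 1 / (Palpha m f * Salpha m α * Malpha m f ^ ((2 * n - 1) * (m - 1)) *
      ((n:ℝ) ^ n * (n.factorial : ℝ)) ^ (m - 1) * B ^ (n - 1) * (C:ℝ) ^ (2 * n * (m - 1)))
      ≤ X := hfinal
    _ = ∑ k, (∑ i, (c i : ℝ) • fun k' => coordVal m α (b i k')) k ^ 2 := by
        rw [hXdef]
        refine Finset.sum_congr rfl fun k _ => ?_
        congr 1
        rw [hxrow]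
        simp [Finset.sum_apply]
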